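/- Define the OR interaction by I_or(S) = -\sum_{T \subseteq S} (-1)^{|S|-|T|} w(N \setminus T) for a function w on subsets of a finite set N. Then for every T \subseteq N, \sum_{S \subseteq N, S \cap T \neq \emptyset} I_or(S) = w(T) - w(\emptyset). -/
import Mathlib

open Finset

lemma pow_card_sum {N : Type*} [DecidableEq N] (x : Finset N) :
    (∑ m ∈ x.powerset, (-1 : ℝ) ^ m.card) = if x = ∅ then 1 else 0 := by
  have := Finset.sum_powerset_neg_one_pow_card (x := x)
  have h := congrArg (Int.cast : ℤ → ℝ) this
  push_cast at h
  simpa using h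

lemma key {N : Type*} [DecidableEq N] (M : Finset N) (f : Finset N → ℝ) :
    ∑ S ∈ M.powerset, ∑ U ∈ S.powerset, (-1 : ℝ) ^ (S.card - U.card) * f U = f M := by
  rw [Finset.sum_comm' (s' := fun U => M.powerset.filter (fun S => U ⊆ S)) (t' := M.powerset)
    (by intro S U
        simp only [mem_powerset, mem_filter]
        constructor
        · rintro ⟨h1, h2⟩; exact ⟨⟨h1, h2⟩, h2.trans h1⟩
        · rintro ⟨⟨h1, h2⟩, _⟩; exact ⟨h1, h2⟩)]
  have h : ∀ U ∈ M.powerset, (∑ S ∈ M.powerset.filter (fun S => U ⊆ S),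
      (-1 : ℝ) ^ (S.card - U.card) * f U) = if U = M then f M else 0 := by
    intro U hU
    rw [mem_powerset] at hU
    rw [Finset.sum_nbij' (i := fun S => S \ U) (j := fun V => U ∪ V) (t := (M \ U).powerset)
      (g := fun V => (-1 : ℝ) ^ V.card * f U)]
    · rw [← Finset.sum_mul, pow_card_sum]
      by_cases hMU : M \ U = ∅
      · have hUM : U = M := hU.antisymm (sdiff_eq_empty_iff_subset.mp hMU)
        rw [if_pos hMU, if_pos hUM, hUM, one_mul]
      · rw [if_neg hMU, if_neg (fun h => hMU (by simp [h])), zero_mul]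
    · intro S hS
      simp only [mem_filter, mem_powerset] at hS ⊢
      exact sdiff_subset_sdiff hS.1 (le_refl _)
    · intro V hV
      simp only [mem_filter, mem_powerset] at hV ⊢
      exact ⟨union_subset hU (hV.trans (sdiff_subset)), subset_union_left⟩
    · intro S hS
      simp only [mem_filter, mem_powerset] at hS
      exact union_sdiff_of_subset hS.2
    · intro V hV
      simp only [mem_powerset] at hV
      exact union_sdiff_cancel_left (disjoint_sdiff.mono_right hV)
    · intro S hS
      simp only [mem_filter, mem_powerset] at hS
      congr 1
      rw [card_sdiff_of_subset hS.2]
  rw [Finset.sum_congr rfl h]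
  simp

theorem or_interaction_universal_matching
    {N : Type*} [Fintype N] [DecidableEq N] (w : Finset N → ℝ) :
    ∀ T : Finset N,
      (∑ S ∈ Finset.univ.powerset.filter (fun S : Finset N => (S ∩ T).Nonempty),
        (-(∑ U ∈ S.powerset, (-1 : ℝ) ^ (S.card - U.card) * w (Finset.univ \ U))))
      = w T - w ∅ := by
  intro T
  set g : Finset N → ℝ :=
    fun S => -(∑ U ∈ S.powerset, (-1 : ℝ) ^ (S.card - U.card) * w (Finset.univ \ U)) with hg
  have hsplit := Finset.sum_filter_add_sum_filter_not (Finset.univ.powerset)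
    (fun S : Finset N => (S ∩ T).Nonempty) g
  have hnot : Finset.univ.powerset.filter (fun S : Finset N => ¬ (S ∩ T).Nonempty)
      = (Finset.univ \ T).powerset := by
    ext S
    simp [Finset.not_nonempty_iff_eq_empty, Finset.subset_sdiff,
      ← Finset.disjoint_iff_inter_eq_empty]
  have h1 : ∑ S ∈ (Finset.univ : Finset N).powerset, g S = - w ∅ := by
    simp only [hg]
    rw [Finset.sum_neg_distrib, key, Finset.sdiff_self]
  have h2 : ∑ S ∈ (Finset.univ \ T : Finset N).powerset, g S = - w T := by
    simp only [hg]
    rw [Finset.sum_neg_distrib, key, Finset.sdiff_sdiff_self_left]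
    simp
  rw [hnot, h2] at hsplit
  linarith [hsplit ▸ h1]
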